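/- Let A, B be n × n complex matrices with B invertible and let A' = A + δG for some matrix G and δ > 0. Then |log|det(A + δG)| - log|det A|| ≤ δ · sup_{τ ∈ [0,δ]} ‖(A + τG)^{-1}‖ · ‖G‖_{tr}, provided A + τG is invertible for all τ ∈ [0, δ]. -/

import Mathlib

open Matrix
open scoped ComplexOrder

/-- The trace norm `‖G‖_tr = Tr √(G* G)` of a complex square matrix. -/
noncomputable def traceNorm {n : ℕ} (G : Matrix (Fin n) (Fin n) ℂ) : ℝ :=
  (((Matrix.posSemidef_conjTranspose_mul_self G).1.eigenvectorUnitary.1 *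
    diagonal (((↑) : ℝ → ℂ) ∘ (√·) ∘ (Matrix.posSemidef_conjTranspose_mul_self G).1.eigenvalues) *
    (star (Matrix.posSemidef_conjTranspose_mul_self G).1.eigenvectorUnitary :
      Matrix (Fin n) (Fin n) ℂ)).trace).re

/-- The `ℓ² → ℓ²` operator norm of a complex square matrix. -/
noncomputable def opNorm {n : ℕ} (E : Matrix (Fin n) (Fin n) ℂ) : ℝ :=
  ‖Matrix.toEuclideanCLM (𝕜 := ℂ) E‖

namespace Stmt17Aux


variable {n : ℕ}

noncomputable def detCM (n : ℕ) :
    ContinuousMultilinearMap ℂ (fun _ : Fin n => (Fin n → ℂ)) ℂ :=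
  MultilinearMap.mkContinuous
    ((detRowAlternating : (Fin n → ℂ) [⋀^Fin n]→ₗ[ℂ] ℂ).toMultilinearMap)
    (n.factorial) (by
      intro m
      have hdet : (detRowAlternating : (Fin n → ℂ) [⋀^Fin n]→ₗ[ℂ] ℂ).toMultilinearMap m
          = (Matrix.of m).det := rfl
      rw [hdet, Matrix.det_apply]
      calc ‖∑ σ : Equiv.Perm (Fin n), Equiv.Perm.sign σ • ∏ i, Matrix.of m (σ i) i‖
          ≤ ∑ σ : Equiv.Perm (Fin n), ‖Equiv.Perm.sign σ • ∏ i, Matrix.of m (σ i) i‖ :=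
            norm_sum_le _ _
        _ ≤ ∑ _σ : Equiv.Perm (Fin n), ∏ i, ‖m i‖ := by
            refine Finset.sum_le_sum fun σ _ => ?_
            have h1 : ‖Equiv.Perm.sign σ • ∏ i, Matrix.of m (σ i) i‖
                = ‖∏ i, m (σ i) i‖ := by
              rcases Int.units_eq_one_or (Equiv.Perm.sign σ) with h | h <;>
                simp [h, Units.smul_def]
            rw [h1, norm_prod]
            calc ∏ i, ‖m (σ i) i‖ ≤ ∏ i, ‖m (σ i)‖ := by
                  refine Finset.prod_le_prod (fun i _ => norm_nonneg _) fun i _ => ?_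
                  exact norm_le_pi_norm _ _
              _ = ∏ i, ‖m i‖ := Equiv.prod_comp σ fun j => ‖m j‖
        _ = (n.factorial : ℝ) * ∏ i, ‖m i‖ := by
            rw [Finset.sum_const, Finset.card_univ, Fintype.card_perm, Fintype.card_fin,
              nsmul_eq_mul])

lemma sum_det_updateRow (M G : Matrix (Fin n) (Fin n) ℂ) :
    ∑ i, (M.updateRow i (G i)).det = (M.adjugate * G).trace := by
  have h : ∀ i, (M.updateRow i (G i)).det = ∑ j, G i j * M.adjugate j i := by
    intro i
    have hGi : G i = ∑ j, G i j • (Pi.single j 1 : Fin n → ℂ) := by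
      ext k
      simp [Pi.single_apply, eq_comm]
    have h2 := (detRowAlternating : (Fin n → ℂ) [⋀^Fin n]→ₗ[ℂ] ℂ).toMultilinearMap.map_update_sum
      Finset.univ i (fun j => G i j • (Pi.single j 1 : Fin n → ℂ)) M
    rw [← hGi] at h2
    have e : (M.updateRow i (G i)).det
        = ∑ j, (M.updateRow i (G i j • (Pi.single j 1 : Fin n → ℂ))).det := h2
    rw [e]
    refine Finset.sum_congr rfl fun j _ => ?_
    rw [Matrix.det_updateRow_smul, Matrix.adjugate_apply]
  simp_rw [h]
  rw [Matrix.trace, Finset.sum_comm]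
  simp [Matrix.diag, Matrix.mul_apply, mul_comm]

lemma hasDerivAt_det (A G : Matrix (Fin n) (Fin n) ℂ) (τ : ℝ) :
    HasDerivAt (fun t : ℝ => (A + (t : ℂ) • G).det)
      (((A + (τ : ℂ) • G).adjugate * G).trace) τ := by
  have hg : HasDerivAt (fun t : ℝ => (fun i => (A + (t : ℂ) • G) i : Fin n → (Fin n → ℂ)))
      (fun i => G i) τ := by
    rw [hasDerivAt_pi]
    intro i
    rw [hasDerivAt_pi]
    intro j
    simp only [Matrix.add_apply, Matrix.smul_apply, smul_eq_mul]
    have : HasDerivAt (fun t : ℝ => (t : ℂ)) 1 τ := by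
      simpa using (hasDerivAt_id τ).ofReal_comp
    simpa using (this.mul_const (G i j)).const_add (A i j)
  have hF := ((detCM n).hasFDerivAt (fun i => (A + (τ : ℂ) • G) i)).restrictScalars ℝ
  have h := hF.comp_hasDerivAt τ hg
  have hval : (((detCM n).linearDeriv (fun i => (A + (τ : ℂ) • G) i)).restrictScalars ℝ)
        (fun i => G i)
      = ((A + (τ : ℂ) • G).adjugate * G).trace := by
    show (detCM n).linearDeriv (fun i => (A + (τ : ℂ) • G) i) (fun i => G i) = _
    rw [ContinuousMultilinearMap.linearDeriv_apply, ← sum_det_updateRow]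
    rfl
  exact hval ▸ h




variable {n : ℕ}

noncomputable def sqrtM (G : Matrix (Fin n) (Fin n) ℂ) : Matrix (Fin n) (Fin n) ℂ :=
  (Matrix.posSemidef_conjTranspose_mul_self G).1.eigenvectorUnitary.1 *
    diagonal (((↑) : ℝ → ℂ) ∘ (√·) ∘ (Matrix.posSemidef_conjTranspose_mul_self G).1.eigenvalues) *
    (star (Matrix.posSemidef_conjTranspose_mul_self G).1.eigenvectorUnitary :
      Matrix (Fin n) (Fin n) ℂ)

lemma sqrt_psd_aux {M : Matrix (Fin n) (Fin n) ℂ} (hM : M.PosSemidef) :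
    (hM.1.eigenvectorUnitary.1 * diagonal (((↑) : ℝ → ℂ) ∘ (√·) ∘ hM.1.eigenvalues) *
      (star hM.1.eigenvectorUnitary : Matrix (Fin n) (Fin n) ℂ)).PosSemidef := by
  have hd : (diagonal (((↑) : ℝ → ℂ) ∘ (√·) ∘ hM.1.eigenvalues)).PosSemidef := by
    refine Matrix.PosSemidef.diagonal ?_
    intro i
    exact Complex.zero_le_real.mpr (Real.sqrt_nonneg _)
  have := hd.mul_mul_conjTranspose_same (hM.1.eigenvectorUnitary : Matrix (Fin n) (Fin n) ℂ)
  rw [Matrix.star_eq_conjTranspose]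
  exact this

lemma sqrt_sq_aux {M : Matrix (Fin n) (Fin n) ℂ} (hM : M.PosSemidef) :
    (hM.1.eigenvectorUnitary.1 * diagonal (((↑) : ℝ → ℂ) ∘ (√·) ∘ hM.1.eigenvalues) *
      (star hM.1.eigenvectorUnitary : Matrix (Fin n) (Fin n) ℂ)) *
    (hM.1.eigenvectorUnitary.1 * diagonal (((↑) : ℝ → ℂ) ∘ (√·) ∘ hM.1.eigenvalues) *
      (star hM.1.eigenvectorUnitary : Matrix (Fin n) (Fin n) ℂ)) = M := by
  have hUU : (star hM.1.eigenvectorUnitary : Matrix (Fin n) (Fin n) ℂ) *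
      hM.1.eigenvectorUnitary = 1 := Unitary.coe_star_mul_self _
  have hD : diagonal (((↑) : ℝ → ℂ) ∘ (√·) ∘ hM.1.eigenvalues) *
      diagonal (((↑) : ℝ → ℂ) ∘ (√·) ∘ hM.1.eigenvalues)
      = diagonal (RCLike.ofReal ∘ hM.1.eigenvalues) := by
    rw [diagonal_mul_diagonal]
    congr 1
    funext i
    simp only [Function.comp_apply]
    rw [← Complex.ofReal_mul, Real.mul_self_sqrt (hM.eigenvalues_nonneg i)]
    rfl
  conv_rhs => rw [hM.1.spectral_theorem, Unitary.conjStarAlgAut_apply]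
  simp only [Matrix.mul_assoc]
  rw [← Matrix.mul_assoc _ _ (diagonal _ * _), hUU, Matrix.one_mul, ← Matrix.mul_assoc _ _ (star _ : Matrix (Fin n) (Fin n) ℂ), hD]

lemma sqrtM_psd (G : Matrix (Fin n) (Fin n) ℂ) : (sqrtM G).PosSemidef :=
  sqrt_psd_aux (Matrix.posSemidef_conjTranspose_mul_self G)

lemma sqrtM_mul_self (G : Matrix (Fin n) (Fin n) ℂ) : sqrtM G * sqrtM G = Gᴴ * G :=
  sqrt_sq_aux (Matrix.posSemidef_conjTranspose_mul_self G)

lemma traceNorm_eq_sum (G : Matrix (Fin n) (Fin n) ℂ) :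
    traceNorm G =
      ∑ i, (sqrtM_psd G).1.eigenvalues i := by
  set hG := Matrix.posSemidef_conjTranspose_mul_self G
  set hP : (sqrtM G).IsHermitian := (sqrtM_psd G).1
  have h1 : (sqrtM G).trace = ∑ i, (hP.eigenvalues i : ℂ) := by
    conv_lhs => rw [hP.spectral_theorem, Unitary.conjStarAlgAut_apply]
    rw [Matrix.trace_mul_cycle, (Matrix.mem_unitaryGroup_iff').mp hP.eigenvectorUnitary.2,
      Matrix.one_mul]
    simp [Matrix.trace_diagonal]
  rw [show traceNorm G = (sqrtM G).trace.re from rfl, h1]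
  simp

lemma traceNorm_nonneg (G : Matrix (Fin n) (Fin n) ℂ) : 0 ≤ traceNorm G := by
  rw [traceNorm_eq_sum]
  exact Finset.sum_nonneg fun i _ =>
    (sqrtM_psd G).eigenvalues_nonneg i

/-- Schatten–Hölder: `|Tr (E G)| ≤ ‖E‖ ‖G‖_tr`. -/
lemma abs_trace_le (E G : Matrix (Fin n) (Fin n) ℂ) :
    ‖(E * G).trace‖ ≤ opNorm E * traceNorm G := by
  classical
  set hG := Matrix.posSemidef_conjTranspose_mul_self G
  set P := sqrtM G with hPdef
  have hPsd : P.PosSemidef := sqrtM_psd G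
  set hP : P.IsHermitian := hPsd.1
  set U : Matrix (Fin n) (Fin n) ℂ := (hP.eigenvectorUnitary : Matrix (Fin n) (Fin n) ℂ) with hU
  set μ : Fin n → ℝ := hP.eigenvalues
  set y : Fin n → EuclideanSpace ℂ (Fin n) := fun i => hP.eigenvectorBasis i
  -- trace written via conjugation by U
  have htr : (E * G).trace = (star U * ((E * G) * U)).trace := by
    have hUU : U * star U = 1 := (Matrix.mem_unitaryGroup_iff).mp hP.eigenvectorUnitary.2
    have h := Matrix.trace_mul_comm (star U) ((E * G) * U)
    rw [Matrix.mul_assoc (E * G) U (star U), hUU, Matrix.mul_one] at h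
    exact h.symm
  -- diagonal entries are inner products
  have hdiag : ∀ M : Matrix (Fin n) (Fin n) ℂ, ∀ i,
      (star U * (M * U)) i i = inner ℂ (y i) (Matrix.toEuclideanCLM (𝕜 := ℂ) M (y i)) := by
    intro M i
    have hT : ∀ j, (Matrix.toEuclideanCLM (𝕜 := ℂ) M (y i)) j = ∑ k, M j k * y i k :=
      fun j => rfl
    have hy : ∀ j, U j i = y i j := fun j => hP.eigenvectorUnitary_apply j i
    rw [PiLp.inner_apply]
    simp only [RCLike.inner_apply, hT, Matrix.mul_apply, Matrix.star_apply, hy]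
    exact Finset.sum_congr rfl fun j _ => by rw [starRingEnd_apply, mul_comm]
  -- norm of G applied to an eigenvector of P
  have hGP : ∀ i, ‖Matrix.toEuclideanCLM (𝕜 := ℂ) G (y i)‖ = μ i := by
    intro i
    set TG := Matrix.toEuclideanCLM (𝕜 := ℂ) G
    set TP := Matrix.toEuclideanCLM (𝕜 := ℂ) P
    have hTPy : TP (y i) = μ i • y i := by
      refine (WithLp.equiv 2 (Fin n → ℂ)).injective ?_
      have h2 := hP.mulVec_eigenvectorBasis i
      change (Matrix.toEuclideanCLM (𝕜 := ℂ) P (y i)).ofLp = (μ i • y i).ofLp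
      rw [Matrix.ofLp_toEuclideanCLM]
      rw [WithLp.ofLp_smul]
      exact h2
    have hinner : (inner ℂ (TG (y i)) (TG (y i)) : ℂ) = inner ℂ (TP (y i)) (TP (y i)) := by
      have e1 : (inner ℂ (y i) ((ContinuousLinearMap.adjoint TG) (TG (y i))) : ℂ)
          = inner ℂ (TG (y i)) (TG (y i)) :=
        ContinuousLinearMap.adjoint_inner_right TG (y i) (TG (y i))
      have e2 : ContinuousLinearMap.adjoint TG = Matrix.toEuclideanCLM (𝕜 := ℂ) Gᴴ := by
        rw [← ContinuousLinearMap.star_eq_adjoint, ← map_star]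
        rfl
      have e3 : (Matrix.toEuclideanCLM (𝕜 := ℂ) Gᴴ) (TG (y i)) = TP (TP (y i)) := by
        have : Gᴴ * G = P * P := (sqrtM_mul_self G).symm
        calc (Matrix.toEuclideanCLM (𝕜 := ℂ) Gᴴ) (TG (y i))
            = (Matrix.toEuclideanCLM (𝕜 := ℂ) (Gᴴ * G)) (y i) := by rw [_root_.map_mul]; rfl
          _ = (Matrix.toEuclideanCLM (𝕜 := ℂ) (P * P)) (y i) := by rw [this]
          _ = TP (TP (y i)) := by rw [_root_.map_mul]; rfl
      have e4 : (inner ℂ (y i) (TP (TP (y i))) : ℂ) = inner ℂ (TP (y i)) (TP (y i)) := by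
        have e5 : ContinuousLinearMap.adjoint TP = TP := by
          rw [← ContinuousLinearMap.star_eq_adjoint, ← map_star]
          show Matrix.toEuclideanCLM (𝕜 := ℂ) Pᴴ = _
          rw [hP]
        have h6 := ContinuousLinearMap.adjoint_inner_right TP (y i) (TP (y i))
        rw [e5] at h6
        exact h6
      rw [← e1, e2, e3, e4]
    have hnormsq : ‖TG (y i)‖ ^ 2 = ‖TP (y i)‖ ^ 2 := by
      have := hinner
      rw [inner_self_eq_norm_sq_to_K, inner_self_eq_norm_sq_to_K] at this
      exact_mod_cast this
    have hyn : ‖y i‖ = 1 := hP.eigenvectorBasis.orthonormal.1 i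
    have hTPn : ‖TP (y i)‖ = μ i := by
      rw [hTPy, norm_smul, hyn, mul_one, Real.norm_eq_abs,
        abs_of_nonneg (hPsd.eigenvalues_nonneg i)]
    have := congrArg Real.sqrt hnormsq
    rwa [Real.sqrt_sq (norm_nonneg _), Real.sqrt_sq (norm_nonneg _), hTPn] at this
  -- assemble
  have hbound : ∀ i,
      ‖(inner ℂ (y i) (Matrix.toEuclideanCLM (𝕜 := ℂ) (E * G) (y i)) : ℂ)‖ ≤ opNorm E * μ i := by
    intro i
    have hyn : ‖y i‖ = 1 := hP.eigenvectorBasis.orthonormal.1 i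
    have hsplit : Matrix.toEuclideanCLM (𝕜 := ℂ) (E * G) (y i)
        = Matrix.toEuclideanCLM (𝕜 := ℂ) E (Matrix.toEuclideanCLM (𝕜 := ℂ) G (y i)) := by
      rw [_root_.map_mul]; rfl
    calc ‖(inner ℂ (y i) (Matrix.toEuclideanCLM (𝕜 := ℂ) (E * G) (y i)) : ℂ)‖
        ≤ ‖y i‖ * ‖Matrix.toEuclideanCLM (𝕜 := ℂ) (E * G) (y i)‖ := norm_inner_le_norm _ _
      _ = ‖Matrix.toEuclideanCLM (𝕜 := ℂ) E (Matrix.toEuclideanCLM (𝕜 := ℂ) G (y i))‖ := by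
          rw [hyn, one_mul, hsplit]
      _ ≤ opNorm E * ‖Matrix.toEuclideanCLM (𝕜 := ℂ) G (y i)‖ :=
          (Matrix.toEuclideanCLM (𝕜 := ℂ) E).le_opNorm _
      _ = opNorm E * μ i := by rw [hGP i]
  calc ‖(E * G).trace‖ = ‖∑ i, (star U * ((E * G) * U)) i i‖ := by
        rw [htr]; rfl
    _ ≤ ∑ i, ‖(star U * ((E * G) * U)) i i‖ := norm_sum_le _ _
    _ ≤ ∑ i, opNorm E * μ i := by
        refine Finset.sum_le_sum fun i _ => ?_
        rw [hdiag (E * G) i]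
        exact hbound i
    _ = opNorm E * traceNorm G := by
        rw [traceNorm_eq_sum, Finset.mul_sum]




lemma hasDerivAt_log_abs (φ : ℝ → ℂ) (φ' : ℂ) (τ : ℝ) (hφ : HasDerivAt φ φ' τ)
    (hne : φ τ ≠ 0) :
    HasDerivAt (fun t => Real.log (‖φ t‖)) ((φ' / φ τ).re) τ := by
  have hre : HasDerivAt (fun t => (φ t).re) φ'.re τ :=
    (Complex.reCLM.hasFDerivAt.comp_hasDerivAt τ hφ)
  have him : HasDerivAt (fun t => (φ t).im) φ'.im τ :=
    (Complex.imCLM.hasFDerivAt.comp_hasDerivAt τ hφ)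
  have hu : HasDerivAt (fun t => (φ t).re ^ 2 + (φ t).im ^ 2)
      (2 * (φ τ).re ^ 1 * φ'.re + 2 * (φ τ).im ^ 1 * φ'.im) τ :=
    ((hre.pow 2).add (him.pow 2))
  have hune : (φ τ).re ^ 2 + (φ τ).im ^ 2 ≠ 0 := by
    have := Complex.normSq_pos.mpr hne
    rw [Complex.normSq_apply] at this
    nlinarith [this]
  have hlog := (hu.log hune).div_const 2
  have heq : (fun t => Real.log (‖φ t‖))
      = fun t => Real.log ((φ t).re ^ 2 + (φ t).im ^ 2) / 2 := by
    funext t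
    rw [Complex.norm_def, Real.log_sqrt (Complex.normSq_nonneg _), Complex.normSq_apply]
    ring_nf
  have hune' : (φ τ).re * (φ τ).re + (φ τ).im * (φ τ).im ≠ 0 := by
    intro h; apply hune; nlinarith [h]
  have hval : (φ' / φ τ).re
      = (2 * (φ τ).re ^ 1 * φ'.re + 2 * (φ τ).im ^ 1 * φ'.im)
        / ((φ τ).re ^ 2 + (φ τ).im ^ 2) / 2 := by
    rw [Complex.div_re, Complex.normSq_apply]
    field_simp [hune']
  rw [heq, hval]
  exact hlog

end Stmt17Aux

/-- If `A + τG` is invertible for all `τ ∈ [0,δ]`, then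
`|log|det(A + δG)| - log|det A|| ≤ δ · sup_{τ∈[0,δ]} ‖(A + τG)⁻¹‖ · ‖G‖_tr`. -/
theorem stmt17 (n : ℕ) (A G : Matrix (Fin n) (Fin n) ℂ) (δ : ℝ) (hδ : 0 < δ)
    (hinv : ∀ τ : ℝ, τ ∈ Set.Icc 0 δ → IsUnit (A + (τ : ℂ) • G)) :
    |Real.log (‖(A + (δ : ℂ) • G).det‖) - Real.log (‖A.det‖)|
      ≤ δ * (⨆ τ : Set.Icc (0:ℝ) δ, opNorm (A + (τ.1 : ℂ) • G)⁻¹) * traceNorm G := by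
  set S := ⨆ τ : Set.Icc (0:ℝ) δ, opNorm (A + (τ.1 : ℂ) • G)⁻¹ with hS
  set f : ℝ → ℝ := fun t => Real.log (‖(A + (t : ℂ) • G).det‖) with hf
  set f' : ℝ → ℝ := fun t =>
    ((((A + (t : ℂ) • G).adjugate * G).trace / (A + (t : ℂ) • G).det).re) with hf'
  have hdetne : ∀ t ∈ Set.Icc (0:ℝ) δ, (A + (t : ℂ) • G).det ≠ 0 := fun t ht => by
    have := (Matrix.isUnit_iff_isUnit_det _).mp (hinv t ht)
    exact this.ne_zero
  have hder : ∀ t ∈ Set.Icc (0:ℝ) δ,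
      HasDerivWithinAt f (f' t) (Set.Icc (0:ℝ) δ) t := fun t ht =>
    (Stmt17Aux.hasDerivAt_log_abs _ _ t (Stmt17Aux.hasDerivAt_det A G t) (hdetne t ht)).hasDerivWithinAt
  -- f' t = Re (Tr ((A+tG)⁻¹ G))
  have hfval : ∀ t, t ∈ Set.Icc (0:ℝ) δ →
      f' t = (((A + (t : ℂ) • G)⁻¹ * G).trace).re := by
    intro t ht
    have : ((A + (t : ℂ) • G)⁻¹ * G).trace
        = ((A + (t : ℂ) • G).adjugate * G).trace / (A + (t : ℂ) • G).det := by
      rw [Matrix.inv_def, Matrix.smul_mul, Matrix.trace_smul, Ring.inverse_eq_inv',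
        smul_eq_mul, div_eq_inv_mul]
    rw [hf', this]
  -- continuity and boundedness of opNorm of inverse
  have hBdd : BddAbove (Set.range fun τ : Set.Icc (0:ℝ) δ =>
      opNorm (A + (τ.1 : ℂ) • G)⁻¹) := by
    have hM : Continuous (fun t : ℝ => A + (t : ℂ) • G) := by
      exact continuous_const.add ((Complex.continuous_ofReal).smul continuous_const)
    have hginv : ContinuousOn (fun t : ℝ => (A + (t : ℂ) • G)⁻¹) (Set.Icc 0 δ) := by
      have heq : ∀ t : ℝ, (A + (t : ℂ) • G)⁻¹
          = ((A + (t : ℂ) • G).det)⁻¹ • (A + (t : ℂ) • G).adjugate := by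
        intro t; rw [Matrix.inv_def, Ring.inverse_eq_inv']
      simp_rw [heq]
      exact ((hM.matrix_det.continuousOn.inv₀ hdetne).smul
        hM.matrix_adjugate.continuousOn)
    let L : Matrix (Fin n) (Fin n) ℂ →ₗ[ℂ]
        (EuclideanSpace ℂ (Fin n) →L[ℂ] EuclideanSpace ℂ (Fin n)) :=
      { toFun := fun M => Matrix.toEuclideanCLM (𝕜 := ℂ) M,
        map_add' := fun a b => map_add _ a b,
        map_smul' := fun c M => map_smul _ c M }
    have hL : Continuous L := L.continuous_of_finiteDimensional
    have hcont : ContinuousOn (fun t : ℝ => opNorm (A + (t : ℂ) • G)⁻¹) (Set.Icc 0 δ) :=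
      (continuous_norm.comp hL).comp_continuousOn hginv
    have hc := (isCompact_Icc.image_of_continuousOn hcont).bddAbove
    rwa [Set.image_eq_range] at hc
  have hSle : ∀ t (ht : t ∈ Set.Icc (0:ℝ) δ), opNorm (A + (t : ℂ) • G)⁻¹ ≤ S :=
    fun t ht => le_ciSup hBdd (⟨t, ht⟩ : Set.Icc (0:ℝ) δ)
  -- derivative bound
  have hbound : ∀ t ∈ Set.Ico (0:ℝ) δ, ‖f' t‖ ≤ S * traceNorm G := by
    intro t ht
    have ht' : t ∈ Set.Icc (0:ℝ) δ := Set.Ico_subset_Icc_self ht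
    rw [hfval t ht']
    calc ‖(((A + (t : ℂ) • G)⁻¹ * G).trace).re‖
        ≤ ‖((A + (t : ℂ) • G)⁻¹ * G).trace‖ := by
          rw [Real.norm_eq_abs]
          exact Complex.abs_re_le_norm _
      _ ≤ opNorm (A + (t : ℂ) • G)⁻¹ * traceNorm G := Stmt17Aux.abs_trace_le _ _
      _ ≤ S * traceNorm G :=
          mul_le_mul_of_nonneg_right (hSle t ht') (Stmt17Aux.traceNorm_nonneg G)
  have hMVT := norm_image_sub_le_of_norm_deriv_le_segment' hder hbound δ
    (Set.right_mem_Icc.mpr hδ.le)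
  have hf0 : f 0 = Real.log (‖A.det‖) := by
    simp [hf]
  rw [hf0] at hMVT
  calc |Real.log (‖(A + (δ : ℂ) • G).det‖) - Real.log (‖A.det‖)|
      ≤ S * traceNorm G * (δ - 0) := hMVT
    _ = δ * S * traceNorm G := by ring
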